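/- Fix integers k ≥ 1, n ≥ 1, nonnegative integers s₁,…,s_k, t₁,…,t_k and nonnegative integers e_{i,j} = e_{j,i} for i ≠ j in {1,…,k}. Then for every flow f in the associated flow network and all permutations β₁,…,β_k of {1,…,2n}: F_{n,n}(β) ≥ |f|·(2n − 2). In particular F_{n,n}(β) ≥ X(2n−2), where X is the maximum value of a flow. -/

import Mathlib

/-!
For a permutation `σ` of a finite set of size `m`, `cycleCount σ` is the number of cycles
(fixed points count as cycles) and `permLen σ = m - cycleCount σ` (the minimal number of
transpositions needed to write `σ`).  We model `{1,…,2n}` as `Fin n ⊕ Fin n`, the first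
summand being `{1,…,n}` and the second `{n+1,…,2n}`.  `gammaNN n` is the product of the
two `n`-cycles `(1,2,…,n)` and `(n+1,…,2n)`.
-/

/-- The number of cycles of a permutation, where fixed points count as cycles. -/
noncomputable def cycleCount {α : Type*} [Fintype α] [DecidableEq α]
    (σ : Equiv.Perm α) : ℕ :=
  Multiset.card σ.cycleType + (Fintype.card α - σ.support.card)

/-- `|σ| = m - #(σ)`, the minimal number of transpositions whose product is `σ`. -/
noncomputable def permLen {α : Type*} [Fintype α] [DecidableEq α]
    (σ : Equiv.Perm α) : ℕ :=
  Fintype.card α - cycleCount σ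

/-- `γ_{n,n}`: the product of the two `n`-cycles `(1,…,n)` and `(n+1,…,2n)`. -/
def gammaNN (n : ℕ) : Equiv.Perm (Fin n ⊕ Fin n) :=
  Equiv.sumCongr (finRotate n) (finRotate n)

/-- A permutation of `{1,…,2n}` is connected if some cycle of it contains both an
element of `{1,…,n}` and an element of `{n+1,…,2n}`. -/
def IsConnectedPerm {n : ℕ} (β : Equiv.Perm (Fin n ⊕ Fin n)) : Prop :=
  ∃ a b : Fin n, β.SameCycle (Sum.inl a) (Sum.inr b)

/-- `F_{n,n}(α,β) = Σᵢ (sᵢ|γ_{n,n}⁻¹αᵢ| + tᵢ|αᵢ|) + Σ_{i<j} e_{i,j}|βᵢ⁻¹βⱼ| + Σᵢ dᵢ|βᵢαᵢ⁻¹|`. -/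
noncomputable def FnnPair (n k : ℕ) (s t d : Fin k → ℕ) (e : Fin k → Fin k → ℕ)
    (A B : Fin k → Equiv.Perm (Fin n ⊕ Fin n)) : ℕ :=
  (∑ i, (s i * permLen ((gammaNN n)⁻¹ * A i) + t i * permLen (A i)))
    + (∑ i, ∑ j, if i < j then e i j * permLen ((B i)⁻¹ * B j) else 0)
    + (∑ i, d i * permLen (B i * (A i)⁻¹))

/-- `F_{n,n}(β) = Σᵢ (sᵢ|γ_{n,n}⁻¹βᵢ| + tᵢ|βᵢ|) + Σ_{i<j} e_{i,j}|βᵢ⁻¹βⱼ|`. -/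
noncomputable def FnnOne (n k : ℕ) (s t : Fin k → ℕ) (e : Fin k → Fin k → ℕ)
    (B : Fin k → Equiv.Perm (Fin n ⊕ Fin n)) : ℕ :=
  (∑ i, (s i * permLen ((gammaNN n)⁻¹ * B i) + t i * permLen (B i)))
    + (∑ i, ∑ j, if i < j then e i j * permLen ((B i)⁻¹ * B j) else 0)

/-- Vertices of the flow network: `Sum.inl i` are the inner vertices `1,…,k`,
`Sum.inr true` is the source and `Sum.inr false` is the sink. -/
abbrev NetVertex (k : ℕ) := Fin k ⊕ Bool

/-- The source of the flow network. -/
def netSrc (k : ℕ) : NetVertex k := Sum.inr true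

/-- The sink of the flow network. -/
def netSnk (k : ℕ) : NetVertex k := Sum.inr false

/-- Capacities: `c(src,i) = sᵢ`, `c(i,snk) = tᵢ`, `c(i,j) = e_{i,j}` for `i ≠ j`,
and `0` on all other ordered pairs. -/
def netCap {k : ℕ} (s t : Fin k → ℕ) (e : Fin k → Fin k → ℕ) :
    NetVertex k → NetVertex k → ℤ
  | Sum.inr true, Sum.inl i => s i
  | Sum.inl i, Sum.inr false => t i
  | Sum.inl i, Sum.inl j => if i = j then 0 else e i j
  | _, _ => 0

/-- A flow with respect to capacities `c`: bounded by capacities, skew-symmetric,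
and conserved at every vertex other than the source and the sink. -/
def IsFlow {k : ℕ} (c f : NetVertex k → NetVertex k → ℤ) : Prop :=
  (∀ u v, f u v ≤ c u v) ∧ (∀ u v, f u v = - f v u) ∧
    (∀ u, u ≠ netSrc k → u ≠ netSnk k → ∑ v, f v u = 0)

/-- The value `|f| = Σᵤ f(src, u)` of a flow. -/
def flowValue {k : ℕ} (f : NetVertex k → NetVertex k → ℤ) : ℤ :=
  ∑ u, f (netSrc k) u


section PermLenAux

open Equiv Equiv.Perm Module

variable {α : Type*} [Fintype α] [DecidableEq α]

/-- The linear action `v ↦ v ∘ σ` on `ℚ^α`. -/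
noncomputable def permL (σ : Equiv.Perm α) : (α → ℚ) →ₗ[ℚ] (α → ℚ) :=
  LinearMap.funLeft ℚ ℚ σ

lemma permL_mul (σ τ : Equiv.Perm α) :
    permL (σ * τ) = (permL τ).comp (permL σ) := by
  have h : ⇑(σ * τ) = (⇑σ ∘ ⇑τ) := rfl
  rw [permL, h, LinearMap.funLeft_comp]
  rfl

lemma permL_sub_id_apply (σ : Equiv.Perm α) (v : α → ℚ) (x : α) :
    ((permL σ - LinearMap.id : (α → ℚ) →ₗ[ℚ] (α → ℚ))) v x = v (σ x) - v x := rfl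

lemma mem_ker_permL {σ : Equiv.Perm α} {v : α → ℚ} :
    v ∈ LinearMap.ker (permL σ - LinearMap.id) ↔ ∀ x, v (σ x) = v x := by
  constructor
  · intro h x
    have h2 := congrFun (LinearMap.mem_ker.mp h) x
    rw [permL_sub_id_apply] at h2
    have : v (σ x) - v x = 0 := h2
    linarith
  · intro h
    exact LinearMap.mem_ker.mpr (funext fun x => by
      rw [permL_sub_id_apply, h, sub_self]; rfl)

lemma ker_const {σ : Equiv.Perm α} {v : α → ℚ} (hv : ∀ x, v (σ x) = v x) :
    ∀ (k : ℤ) (x : α), v ((σ ^ k) x) = v x := by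
  have hinv : ∀ x, v (σ⁻¹ x) = v x := fun x => by
    conv_rhs => rw [← Equiv.apply_symm_apply σ x]
    exact (hv _).symm
  intro k
  induction k using Int.induction_on with
  | zero => simp
  | succ k ih =>
    intro x
    have h : (σ ^ ((k : ℤ) + 1)) x = (σ ^ (k : ℤ)) (σ x) := by
      rw [zpow_add_one]; rfl
    rw [h, ih, hv]
  | pred k ih =>
    intro x
    have h : (σ ^ (-(k : ℤ) - 1)) x = (σ ^ (-(k : ℤ))) (σ⁻¹ x) := by
      rw [zpow_sub_one]; rfl
    rw [h, ih, hinv]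

lemma finrank_ker_permL (σ : Equiv.Perm α) :
    Module.finrank ℚ (LinearMap.ker (permL σ - LinearMap.id)) = cycleCount σ := by
  classical
  have hcyc : ∀ c : {c : Equiv.Perm α // c ∈ σ.cycleFactorsFinset}, c.1.IsCycle :=
    fun c => (Equiv.Perm.mem_cycleFactorsFinset_iff.mp c.2).1
  have hagree : ∀ c : {c : Equiv.Perm α // c ∈ σ.cycleFactorsFinset},
      ∀ a ∈ c.1.support, c.1 a = σ a :=
    fun c => (Equiv.Perm.mem_cycleFactorsFinset_iff.mp c.2).2
  let pt : {c : Equiv.Perm α // c ∈ σ.cycleFactorsFinset} → α := fun c => (hcyc c).choose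
  have hpt : ∀ c, c.1 (pt c) ≠ pt c := fun c => (hcyc c).choose_spec.1
  have hptsupp : ∀ c, pt c ∈ c.1.support := fun c => Equiv.Perm.mem_support.mpr (hpt c)
  have hptσ : ∀ c, σ (pt c) ≠ pt c := fun c => by
    rw [← hagree c (pt c) (hptsupp c)]; exact hpt c
  have hcpt : ∀ c, c.1 = σ.cycleOf (pt c) := fun c =>
    Equiv.Perm.cycle_is_cycleOf (hptsupp c) c.2
  let F : (α → ℚ) →ₗ[ℚ]
      (({c : Equiv.Perm α // c ∈ σ.cycleFactorsFinset} → ℚ) × ({x : α // σ x = x} → ℚ)) :=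
    { toFun := fun v => (fun c => v (pt c), fun x => v x.1),
      map_add' := fun v w => rfl,
      map_smul' := fun a v => rfl }
  let K := LinearMap.ker (permL σ - LinearMap.id)
  let F' := F.comp K.subtype
  have hinj : Function.Injective F' := by
    have hz : ∀ v : K, F' v = 0 → v = 0 := by
      rintro ⟨v, hv⟩ h0
      have hvk : ∀ y, v (σ y) = v y := mem_ker_permL.mp hv
      have h0a := congrArg Prod.fst h0
      have h0b := congrArg Prod.snd h0
      apply Subtype.ext
      funext x
      by_cases hx : σ x = x
      · exact congrFun h0b ⟨x, hx⟩
      · set c : {c : Equiv.Perm α // c ∈ σ.cycleFactorsFinset} :=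
          ⟨σ.cycleOf x, Equiv.Perm.cycleOf_mem_cycleFactorsFinset_iff.mpr
            (Equiv.Perm.mem_support.mpr hx)⟩ with hc
        have hmem : pt c ∈ (σ.cycleOf x).support := hptsupp c
        obtain ⟨⟨k, hk⟩, -⟩ := Equiv.Perm.mem_support_cycleOf_iff.mp hmem
        have h1 : v (pt c) = v x := by rw [← hk]; exact ker_const hvk k x
        have h2 : v (pt c) = 0 := congrFun h0a c
        show v x = 0
        rw [← h1, h2]
    intro v w h
    have := hz (v - w) (by rw [map_sub, h, sub_self])
    exact sub_eq_zero.mp this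
  have hsurj : Function.Surjective F' := by
    rintro ⟨g, h⟩
    let w : α → ℚ := fun x =>
      if hx : σ x = x then h ⟨x, hx⟩
      else g ⟨σ.cycleOf x, Equiv.Perm.cycleOf_mem_cycleFactorsFinset_iff.mpr
        (Equiv.Perm.mem_support.mpr hx)⟩
    have hw : w ∈ K := by
      apply mem_ker_permL.mpr
      intro x
      by_cases hx : σ x = x
      · rw [hx]
      · have hσx : σ (σ x) ≠ σ x := fun hcon => hx (σ.injective hcon)
        show w (σ x) = w x
        simp only [w]
        rw [dif_neg hσx, dif_neg hx]
        exact congrArg g (Subtype.ext (Equiv.Perm.cycleOf_self_apply σ x))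
    refine ⟨⟨w, hw⟩, ?_⟩
    have h1 : (fun c => w (pt c)) = g := by
      funext c
      show w (pt c) = g c
      simp only [w]
      rw [dif_neg (hptσ c)]
      exact congrArg g (Subtype.ext (hcpt c).symm)
    have h2 : (fun x : {x : α // σ x = x} => w x.1) = h := by
      funext x
      show w x.1 = h x
      simp only [w]
      rw [dif_pos x.2]
    exact Prod.ext h1 h2
  have heq := (LinearEquiv.ofBijective F' ⟨hinj, hsurj⟩).finrank_eq
  have hr : Module.finrank ℚ K =
      Fintype.card {c : Equiv.Perm α // c ∈ σ.cycleFactorsFinset}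
        + Fintype.card {x : α // σ x = x} := by
    rw [heq, Module.finrank_prod, Module.finrank_fintype_fun_eq_card,
      Module.finrank_fintype_fun_eq_card]
  have hcard1 : Fintype.card {c : Equiv.Perm α // c ∈ σ.cycleFactorsFinset}
      = Multiset.card σ.cycleType := by
    rw [Fintype.card_of_subtype σ.cycleFactorsFinset (fun x => Iff.rfl),
      Equiv.Perm.cycleType_def, Multiset.card_map]
    rfl
  have hcard2 : Fintype.card {x : α // σ x = x} = Fintype.card α - σ.support.card := by
    rw [Fintype.card_subtype]
    have hfil := Finset.card_filter_add_card_filter_not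
      (s := (Finset.univ : Finset α)) (p := fun x => σ x = x)
    have hsup : σ.support = Finset.univ.filter (fun x => ¬ σ x = x) := rfl
    rw [← hsup, Finset.card_univ] at hfil
    have : σ.support.card ≤ Fintype.card α := Finset.card_le_univ _
    omega
  show Module.finrank ℚ K = _
  rw [hr, hcard1, hcard2, cycleCount]

lemma multiset_card_le_sum (m : Multiset ℕ) (h : ∀ x ∈ m, 1 ≤ x) :
    Multiset.card m ≤ m.sum := by
  induction m using Multiset.induction_on with
  | empty => simp
  | cons a m ih =>
    simp only [Multiset.card_cons, Multiset.sum_cons]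
    have h1 := h a (Multiset.mem_cons_self a m)
    have h2 := ih (fun x hx => h x (Multiset.mem_cons_of_mem hx))
    omega

lemma card_cycleType_le_support (σ : Equiv.Perm α) :
    Multiset.card σ.cycleType ≤ σ.support.card := by
  rw [← Equiv.Perm.sum_cycleType]
  exact multiset_card_le_sum _ (fun x hx => (Equiv.Perm.one_lt_of_mem_cycleType hx).le)

lemma cycleCount_le_card (σ : Equiv.Perm α) : cycleCount σ ≤ Fintype.card α := by
  have h1 := card_cycleType_le_support σ
  have h2 : σ.support.card ≤ Fintype.card α := Finset.card_le_univ _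
  unfold cycleCount
  omega

lemma permLen_eq_finrank (σ : Equiv.Perm α) :
    permLen σ = Module.finrank ℚ (LinearMap.range (permL σ - LinearMap.id)) := by
  have h := LinearMap.finrank_range_add_finrank_ker (permL σ - LinearMap.id)
  rw [finrank_ker_permL, Module.finrank_fintype_fun_eq_card] at h
  have h2 := cycleCount_le_card σ
  unfold permLen
  omega

lemma permLen_mul_le (σ τ : Equiv.Perm α) : permLen (σ * τ) ≤ permLen σ + permLen τ := by
  have key : permL (σ * τ) - LinearMap.id
      = ((permL τ).comp (permL σ - LinearMap.id)) + (permL τ - LinearMap.id) := by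
    rw [permL_mul σ τ]
    ext v x
    simp only [LinearMap.sub_apply, LinearMap.comp_apply, LinearMap.add_apply,
      LinearMap.id_apply, map_sub, Pi.sub_apply, Pi.add_apply]
    ring
  rw [permLen_eq_finrank, permLen_eq_finrank, permLen_eq_finrank, key]
  set A := (permL τ).comp (permL σ - LinearMap.id) with hA
  set Bm := permL τ - LinearMap.id with hB
  have h1 : LinearMap.range (A + Bm) ≤ LinearMap.range A ⊔ LinearMap.range Bm := by
    rintro x ⟨y, rfl⟩
    exact Submodule.add_mem_sup (LinearMap.mem_range_self _ y) (LinearMap.mem_range_self _ y)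
  have h2 : Module.finrank ℚ (LinearMap.range (A + Bm))
      ≤ Module.finrank ℚ (LinearMap.range A ⊔ LinearMap.range Bm : Submodule ℚ (α → ℚ)) :=
    Submodule.finrank_mono h1
  have h3 := Submodule.finrank_add_le_finrank_add_finrank
    (LinearMap.range A) (LinearMap.range Bm)
  have h4 : Module.finrank ℚ (LinearMap.range A)
      ≤ Module.finrank ℚ (LinearMap.range (permL σ - LinearMap.id)) := by
    rw [hA, LinearMap.range_comp]
    exact Submodule.finrank_map_le _ _
  omega

lemma permLen_inv (σ : Equiv.Perm α) : permLen σ⁻¹ = permLen σ := by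
  unfold permLen cycleCount
  rw [Equiv.Perm.cycleType_inv, Equiv.Perm.support_inv]

lemma permLen_one : permLen (1 : Equiv.Perm α) = 0 := by
  unfold permLen cycleCount
  simp

lemma permLen_disjoint_mul {σ τ : Equiv.Perm α} (h : Equiv.Perm.Disjoint σ τ) :
    permLen (σ * τ) = permLen σ + permLen τ := by
  have h1 := h.cycleType_mul
  have h2 := h.card_support_mul
  have h1' : Multiset.card (σ * τ).cycleType
      = Multiset.card σ.cycleType + Multiset.card τ.cycleType := by
    rw [h1, Multiset.card_add]
  have l1 := card_cycleType_le_support σ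
  have l2 := card_cycleType_le_support τ
  have l3 : (σ * τ).support.card ≤ Fintype.card α := Finset.card_le_univ _
  unfold permLen cycleCount
  omega

end PermLenAux

section Gamma
open Equiv Equiv.Perm
lemma sumCongr_zpow_apply_inl {β γ : Type*} (σ : Equiv.Perm β) (τ : Equiv.Perm γ)
    (k : ℤ) (x : β) :
    ((Equiv.sumCongr σ τ : Equiv.Perm (β ⊕ γ)) ^ k) (Sum.inl x) = Sum.inl ((σ ^ k) x) := by
  have h : (Equiv.sumCongr σ τ : Equiv.Perm (β ⊕ γ)) = Equiv.Perm.sumCongrHom β γ (σ, τ) := rfl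
  rw [h, ← map_zpow]
  simp [Equiv.Perm.sumCongrHom]

lemma sumCongr_zpow_apply_inr {β γ : Type*} (σ : Equiv.Perm β) (τ : Equiv.Perm γ)
    (k : ℤ) (x : γ) :
    ((Equiv.sumCongr σ τ : Equiv.Perm (β ⊕ γ)) ^ k) (Sum.inr x) = Sum.inr ((τ ^ k) x) := by
  have h : (Equiv.sumCongr σ τ : Equiv.Perm (β ⊕ γ)) = Equiv.Perm.sumCongrHom β γ (σ, τ) := rfl
  rw [h, ← map_zpow]
  simp [Equiv.Perm.sumCongrHom]

lemma isCycle_sumCongr_left {n : ℕ} (hn : 2 ≤ n) :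
    Equiv.Perm.IsCycle (Equiv.sumCongr (finRotate n) (1 : Equiv.Perm (Fin n)) : Equiv.Perm (Fin n ⊕ Fin n)) := by
  obtain ⟨x0, hx0, hall⟩ := isCycle_finRotate_of_le hn
  refine ⟨Sum.inl x0, by simpa using hx0, ?_⟩
  intro y hy
  cases y with
  | inl b =>
    have hb : finRotate n b ≠ b := by simpa using hy
    obtain ⟨k, hk⟩ := hall hb
    exact ⟨k, by rw [sumCongr_zpow_apply_inl, hk]⟩
  | inr b => simp at hy

lemma isCycle_sumCongr_right {n : ℕ} (hn : 2 ≤ n) :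
    Equiv.Perm.IsCycle (Equiv.sumCongr (1 : Equiv.Perm (Fin n)) (finRotate n) : Equiv.Perm (Fin n ⊕ Fin n)) := by
  obtain ⟨x0, hx0, hall⟩ := isCycle_finRotate_of_le hn
  refine ⟨Sum.inr x0, by simpa using hx0, ?_⟩
  intro y hy
  cases y with
  | inr b =>
    have hb : finRotate n b ≠ b := by simpa using hy
    obtain ⟨k, hk⟩ := hall hb
    exact ⟨k, by rw [sumCongr_zpow_apply_inr, hk]⟩
  | inl b => simp at hy

lemma support_sumCongr_left {n : ℕ} (hn : 2 ≤ n) :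
    Equiv.Perm.support (Equiv.sumCongr (finRotate n) (1 : Equiv.Perm (Fin n)) : Equiv.Perm (Fin n ⊕ Fin n))
      = Finset.univ.image Sum.inl := by
  ext x
  cases x with
  | inl a =>
    have ha : finRotate n a ≠ a := by
      have : a ∈ (finRotate n).support := by
        rw [support_finRotate_of_le hn]; exact Finset.mem_univ a
      exact Equiv.Perm.mem_support.mp this
    simpa [Equiv.Perm.mem_support] using ha
  | inr b =>
    simp [Equiv.Perm.mem_support]

lemma support_sumCongr_right {n : ℕ} (hn : 2 ≤ n) :
    Equiv.Perm.support (Equiv.sumCongr (1 : Equiv.Perm (Fin n)) (finRotate n) : Equiv.Perm (Fin n ⊕ Fin n))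
      = Finset.univ.image Sum.inr := by
  ext x
  cases x with
  | inr a =>
    have ha : finRotate n a ≠ a := by
      have : a ∈ (finRotate n).support := by
        rw [support_finRotate_of_le hn]; exact Finset.mem_univ a
      exact Equiv.Perm.mem_support.mp this
    simpa [Equiv.Perm.mem_support] using ha
  | inl b =>
    simp [Equiv.Perm.mem_support]

lemma isCycle_permLen {α : Type*} [Fintype α] [DecidableEq α] {σ : Equiv.Perm α}
    (h : σ.IsCycle) : permLen σ = σ.support.card - 1 := by
  have hct : σ.cycleType = {σ.support.card} := h.cycleType
  have hs : σ.support.card ≤ Fintype.card α := Finset.card_le_univ _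
  have h2 : 2 ≤ σ.support.card := h.two_le_card_support
  unfold permLen cycleCount
  rw [hct]
  simp only [Multiset.card_singleton]
  omega

lemma permLen_gammaNN {n : ℕ} (hn : 1 ≤ n) : (permLen (gammaNN n) : ℤ) = 2 * n - 2 := by
  rcases eq_or_lt_of_le hn with h1 | h2
  · have h1' : n = 1 := h1.symm
    subst h1'
    have : gammaNN 1 = 1 := by
      rw [gammaNN, finRotate_one]
      exact Equiv.Perm.sumCongr_one
    rw [this, permLen_one]
    norm_num
  · have hn2 : 2 ≤ n := h2
    have hγ : gammaNN n = Equiv.sumCongr (finRotate n) (1 : Equiv.Perm (Fin n))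
        * Equiv.sumCongr (1 : Equiv.Perm (Fin n)) (finRotate n) := by
      rw [Equiv.Perm.sumCongr_mul, mul_one, one_mul]
      rfl
    have hdisj : Equiv.Perm.Disjoint (Equiv.sumCongr (finRotate n) (1 : Equiv.Perm (Fin n)) : Equiv.Perm (Fin n ⊕ Fin n))
        (Equiv.sumCongr (1 : Equiv.Perm (Fin n)) (finRotate n)) := by
      intro x
      cases x with
      | inl a => right; simp
      | inr b => left; simp
    have hc1 : permLen (Equiv.sumCongr (finRotate n) (1 : Equiv.Perm (Fin n))) = n - 1 := by
      rw [isCycle_permLen (isCycle_sumCongr_left hn2), support_sumCongr_left hn2,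
        Finset.card_image_of_injective _ Sum.inl_injective, Finset.card_univ, Fintype.card_fin]
    have hc2 : permLen (Equiv.sumCongr (1 : Equiv.Perm (Fin n)) (finRotate n)) = n - 1 := by
      rw [isCycle_permLen (isCycle_sumCongr_right hn2), support_sumCongr_right hn2,
        Finset.card_image_of_injective _ Sum.inr_injective, Finset.card_univ, Fintype.card_fin]
    rw [hγ, permLen_disjoint_mul hdisj, hc1, hc2]
    push_cast [Nat.cast_sub hn]
    ring

end Gamma

noncomputable def auxPhi (n k : ℕ) (B : Fin k → Equiv.Perm (Fin n ⊕ Fin n)) :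
    NetVertex k → ℤ
  | Sum.inl i => (permLen ((gammaNN n)⁻¹ * B i) : ℤ)
  | Sum.inr true => 0
  | Sum.inr false => 2 * (n : ℤ) - 2

noncomputable def auxH (n k : ℕ) (s t : Fin k → ℕ) (e : Fin k → Fin k → ℕ)
    (B : Fin k → Equiv.Perm (Fin n ⊕ Fin n)) : NetVertex k → NetVertex k → ℤ
  | Sum.inl i, Sum.inl j =>
      if i = j then 0 else (e i j : ℤ) * permLen ((B i)⁻¹ * B j)
  | Sum.inr true, Sum.inl i => (s i : ℤ) * permLen ((gammaNN n)⁻¹ * B i)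
  | Sum.inl i, Sum.inr true => (s i : ℤ) * permLen ((gammaNN n)⁻¹ * B i)
  | Sum.inl i, Sum.inr false => (t i : ℤ) * permLen (B i)
  | Sum.inr false, Sum.inl i => (t i : ℤ) * permLen (B i)
  | Sum.inr _, Sum.inr _ => 0

lemma mul_le_of_bounds (F C C' D H : ℤ) (h1 : F ≤ C) (h2 : -C' ≤ F)
    (h3 : 0 ≤ D → C * D ≤ H) (h4 : D ≤ 0 → C' * (-D) ≤ H) : F * D ≤ H := by
  rcases le_total 0 D with hD | hD
  · exact (mul_le_mul_of_nonneg_right h1 hD).trans (h3 hD)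
  · have h5 : F * D ≤ (-C') * D := mul_le_mul_of_nonpos_right h2 hD
    have h6 : (-C') * D = C' * (-D) := by ring
    rw [h6] at h5
    exact h5.trans (h4 hD)

theorem FnnOne_ge_flowValue (n k : ℕ) (hn : 1 ≤ n) (hk : 1 ≤ k)
    (s t : Fin k → ℕ) (e : Fin k → Fin k → ℕ)
    (hsym : ∀ i j, i ≠ j → e i j = e j i) :
    (∀ (f : NetVertex k → NetVertex k → ℤ), IsFlow (netCap s t e) f →
        ∀ B : Fin k → Equiv.Perm (Fin n ⊕ Fin n),
          flowValue f * (2 * n - 2) ≤ (FnnOne n k s t e B : ℤ)) ∧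
      (∀ X : ℤ, IsGreatest {v : ℤ | ∃ f, IsFlow (netCap s t e) f ∧ flowValue f = v} X →
        ∀ B : Fin k → Equiv.Perm (Fin n ⊕ Fin n),
          X * (2 * n - 2) ≤ (FnnOne n k s t e B : ℤ)) := by
  classical
  have main : ∀ (f : NetVertex k → NetVertex k → ℤ), IsFlow (netCap s t e) f →
      ∀ B : Fin k → Equiv.Perm (Fin n ⊕ Fin n),
        flowValue f * (2 * n - 2) ≤ (FnnOne n k s t e B : ℤ) := by
    intro f hf B
    obtain ⟨hcap, hskew, hcons⟩ := hf
    have Esymm : ∀ i j : Fin k,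
        (permLen ((B i)⁻¹ * B j) : ℤ) = (permLen ((B j)⁻¹ * B i) : ℤ) := by
      intro i j
      have h : ((B i)⁻¹ * B j)⁻¹ = (B j)⁻¹ * B i := by
        rw [mul_inv_rev, inv_inv]
      rw [← permLen_inv ((B i)⁻¹ * B j), h]
    have tri1 : ∀ i : Fin k,
        (2 * (n : ℤ) - 2) ≤ (permLen ((gammaNN n)⁻¹ * B i) : ℤ) + (permLen (B i) : ℤ) := by
      intro i
      have h1 : permLen ((gammaNN n)⁻¹)
          ≤ permLen ((gammaNN n)⁻¹ * B i) + permLen ((B i)⁻¹) := by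
        have h := permLen_mul_le ((gammaNN n)⁻¹ * B i) ((B i)⁻¹)
        rwa [mul_inv_cancel_right] at h
      rw [permLen_inv, permLen_inv] at h1
      calc (2 * (n : ℤ) - 2) = (permLen (gammaNN n) : ℤ) := (permLen_gammaNN hn).symm
        _ ≤ ((permLen ((gammaNN n)⁻¹ * B i) + permLen (B i) : ℕ) : ℤ) := Nat.cast_le.mpr h1
        _ = _ := by push_cast; ring
    have tri2 : ∀ i j : Fin k,
        (permLen ((gammaNN n)⁻¹ * B j) : ℤ)
          ≤ (permLen ((gammaNN n)⁻¹ * B i) : ℤ) + (permLen ((B i)⁻¹ * B j) : ℤ) := by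
      intro i j
      have h := permLen_mul_le ((gammaNN n)⁻¹ * B i) ((B i)⁻¹ * B j)
      rw [show ((gammaNN n)⁻¹ * B i) * ((B i)⁻¹ * B j) = (gammaNN n)⁻¹ * B j by
        rw [mul_assoc, mul_inv_cancel_left]] at h
      exact_mod_cast h
    have hpt : ∀ u v, f u v * (auxPhi n k B v - auxPhi n k B u) ≤ auxH n k s t e B u v := by
      intro u v
      have h1 := hcap u v
      have h2 : -(netCap s t e v u) ≤ f u v := by
        rw [hskew u v]; exact neg_le_neg (hcap v u)
      rcases u with i | b <;> rcases v with j | b'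
      · by_cases hij : i = j
        · subst hij
          simp [auxPhi, auxH]
        · simp only [netCap, if_neg hij] at h1
          have hji : ¬ j = i := fun hh => hij hh.symm
          simp only [netCap, if_neg hji] at h2
          simp only [auxPhi, auxH, if_neg hij]
          refine mul_le_of_bounds _ _ _ _ _ h1 h2 ?_ ?_
          · intro hD
            have hE := tri2 i j
            exact mul_le_mul_of_nonneg_left (by linarith) (by positivity)
          · intro hD
            have hE := tri2 j i
            have h5 : (e i j : ℤ) = (e j i : ℤ) := by exact_mod_cast hsym i j hij
            calc (e j i : ℤ) * (-((permLen ((gammaNN n)⁻¹ * B j) : ℤ)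
                    - (permLen ((gammaNN n)⁻¹ * B i) : ℤ)))
                ≤ (e j i : ℤ) * (permLen ((B j)⁻¹ * B i) : ℤ) :=
                  mul_le_mul_of_nonneg_left (by linarith) (by positivity)
              _ = (e i j : ℤ) * (permLen ((B i)⁻¹ * B j) : ℤ) := by
                  rw [Esymm j i, ← h5]
      · cases b'
        · -- v = snk
          simp only [netCap] at h1 h2
          simp only [auxPhi, auxH]
          refine mul_le_of_bounds _ _ _ _ _ h1 h2 ?_ ?_
          · intro hD
            have hE := tri1 i
            exact mul_le_mul_of_nonneg_left (by linarith) (by positivity)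
          · intro hD
            rw [zero_mul]
            positivity
        · -- v = src
          simp only [netCap] at h1 h2
          simp only [auxPhi, auxH]
          refine mul_le_of_bounds _ _ _ _ _ h1 h2 ?_ ?_
          · intro hD
            rw [zero_mul]
            positivity
          · intro hD
            exact mul_le_mul_of_nonneg_left (by linarith) (by positivity)
      · cases b
        · -- u = snk
          simp only [netCap] at h1 h2
          simp only [auxPhi, auxH]
          refine mul_le_of_bounds _ _ _ _ _ h1 h2 ?_ ?_
          · intro hD
            rw [zero_mul]
            positivity
          · intro hD
            have hE := tri1 j
            exact mul_le_mul_of_nonneg_left (by linarith) (by positivity)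
        · -- u = src
          simp only [netCap] at h1 h2
          simp only [auxPhi, auxH]
          refine mul_le_of_bounds _ _ _ _ _ h1 h2 ?_ ?_
          · intro hD
            exact mul_le_mul_of_nonneg_left (by linarith) (by positivity)
          · intro hD
            rw [zero_mul]
            positivity
      · cases b <;> cases b' <;>
          · simp only [netCap] at h1 h2
            simp only [auxH]
            refine mul_le_of_bounds _ _ _ _ _ h1 h2 (fun _ => by simp) (fun _ => by simp)
    have hrow_inner : ∀ i : Fin k, (∑ v, f (Sum.inl i) v) = 0 := by
      intro i
      have hc := hcons (Sum.inl i) (by simp [netSrc]) (by simp [netSnk])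
      calc ∑ v, f (Sum.inl i) v = ∑ v, -(f v (Sum.inl i)) :=
            Finset.sum_congr rfl fun v _ => hskew _ _
        _ = -∑ v, f v (Sum.inl i) := by rw [Finset.sum_neg_distrib]
        _ = 0 := by rw [hc, neg_zero]
    have hrow_src : ∑ v, f (Sum.inr true : NetVertex k) v = flowValue f := rfl
    have htotal : ∑ u, ∑ v, f u v = 0 := by
      have h1 : ∑ u, ∑ v, f u v = -∑ u, ∑ v, f u v := by
        calc ∑ u, ∑ v, f u v = ∑ u, ∑ v, -(f v u) :=
              Finset.sum_congr rfl fun u _ => Finset.sum_congr rfl fun v _ => hskew u v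
          _ = -∑ u, ∑ v, f v u := by simp only [Finset.sum_neg_distrib]
          _ = -∑ u, ∑ v, f u v := by rw [Finset.sum_comm]
      linarith
    have hrow_snk : ∑ v, f (Sum.inr false : NetVertex k) v = -flowValue f := by
      have h1 := htotal
      rw [Fintype.sum_sum_type] at h1
      have h2 : ∑ i : Fin k, ∑ v, f (Sum.inl i) v = 0 :=
        Finset.sum_eq_zero fun i _ => hrow_inner i
      rw [h2, Fintype.sum_bool, zero_add] at h1
      linarith [hrow_src]
    have hrowsum : ∑ u, (∑ v, f u v) * auxPhi n k B u
        = -(flowValue f) * (2 * (n : ℤ) - 2) := by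
      rw [Fintype.sum_sum_type, Fintype.sum_bool]
      have h1 : ∑ i : Fin k, (∑ v, f (Sum.inl i) v) * auxPhi n k B (Sum.inl i) = 0 :=
        Finset.sum_eq_zero fun i _ => by rw [hrow_inner i, zero_mul]
      rw [h1, hrow_src, hrow_snk]
      simp only [auxPhi]
      ring
    have hA : ∑ u, ∑ v, f u v * (auxPhi n k B v - auxPhi n k B u)
        = 2 * flowValue f * (2 * (n : ℤ) - 2) := by
      have step1 : ∑ u, ∑ v, f u v * (auxPhi n k B v - auxPhi n k B u)
          = (∑ u, ∑ v, f u v * auxPhi n k B v) - (∑ u, ∑ v, f u v * auxPhi n k B u) := by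
        simp only [mul_sub]
        rw [← Finset.sum_sub_distrib]
        exact Finset.sum_congr rfl fun u _ => by rw [Finset.sum_sub_distrib]
      have step2 : ∑ u, ∑ v, f u v * auxPhi n k B v
          = ∑ v, (∑ u, f u v) * auxPhi n k B v := by
        rw [Finset.sum_comm]
        exact Finset.sum_congr rfl fun v _ => by rw [Finset.sum_mul]
      have hcol : ∀ v, (∑ u, f u v) = -∑ u, f v u := by
        intro v
        calc ∑ u, f u v = ∑ u, -(f v u) := Finset.sum_congr rfl fun u _ => hskew _ _
          _ = -∑ u, f v u := Finset.sum_neg_distrib _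
      have step3 : ∑ v, (∑ u, f u v) * auxPhi n k B v
          = -∑ v, (∑ u, f v u) * auxPhi n k B v := by
        rw [← Finset.sum_neg_distrib]
        exact Finset.sum_congr rfl fun v _ => by rw [hcol v]; ring
      have step4 : ∑ u, ∑ v, f u v * auxPhi n k B u
          = ∑ u, (∑ v, f u v) * auxPhi n k B u :=
        Finset.sum_congr rfl fun u _ => by rw [Finset.sum_mul]
      rw [step1, step2, step3, step4, hrowsum]
      ring
    have hEpartswap : ∑ i : Fin k, ∑ j : Fin k,
          (if j < i then (e i j : ℤ) * permLen ((B i)⁻¹ * B j) else 0)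
        = ∑ i : Fin k, ∑ j : Fin k,
          (if i < j then (e i j : ℤ) * permLen ((B i)⁻¹ * B j) else 0) := by
      rw [Finset.sum_comm]
      refine Finset.sum_congr rfl fun i _ => Finset.sum_congr rfl fun j _ => ?_
      by_cases h : i < j
      · rw [if_pos h, if_pos h, Esymm j i,
          show ((e j i : ℤ)) = (e i j : ℤ) from by exact_mod_cast hsym j i h.ne']
      · rw [if_neg h, if_neg h]
    have hEpart : ∑ i : Fin k, ∑ j : Fin k,
          (if i = j then 0 else (e i j : ℤ) * permLen ((B i)⁻¹ * B j))
        = 2 * ∑ i : Fin k, ∑ j : Fin k,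
          (if i < j then (e i j : ℤ) * permLen ((B i)⁻¹ * B j) else 0) := by
      have hsplit : ∀ i j : Fin k,
          (if i = j then 0 else (e i j : ℤ) * permLen ((B i)⁻¹ * B j))
          = (if i < j then (e i j : ℤ) * permLen ((B i)⁻¹ * B j) else 0)
            + (if j < i then (e i j : ℤ) * permLen ((B i)⁻¹ * B j) else 0) := by
        intro i j
        rcases lt_trichotomy i j with h | h | h
        · rw [if_neg h.ne, if_pos h, if_neg (asymm h), add_zero]
        · subst h
          simp
        · rw [if_neg h.ne', if_neg (asymm h), if_pos h, zero_add]
      calc ∑ i : Fin k, ∑ j : Fin k,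
            (if i = j then 0 else (e i j : ℤ) * permLen ((B i)⁻¹ * B j))
          = ∑ i : Fin k, ∑ j : Fin k,
            ((if i < j then (e i j : ℤ) * permLen ((B i)⁻¹ * B j) else 0)
              + (if j < i then (e i j : ℤ) * permLen ((B i)⁻¹ * B j) else 0)) :=
            Finset.sum_congr rfl fun i _ => Finset.sum_congr rfl fun j _ => hsplit i j
        _ = (∑ i : Fin k, ∑ j : Fin k,
              (if i < j then (e i j : ℤ) * permLen ((B i)⁻¹ * B j) else 0))
            + (∑ i : Fin k, ∑ j : Fin k,
              (if j < i then (e i j : ℤ) * permLen ((B i)⁻¹ * B j) else 0)) := by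
            simp only [Finset.sum_add_distrib]
        _ = _ := by rw [hEpartswap]; ring
    have hC2 : ∑ u, ∑ v, auxH n k s t e B u v = 2 * (FnnOne n k s t e B : ℤ) := by
      have hF : (FnnOne n k s t e B : ℤ)
          = (∑ i, ((s i : ℤ) * permLen ((gammaNN n)⁻¹ * B i) + (t i : ℤ) * permLen (B i)))
            + ∑ i, ∑ j, (if i < j then (e i j : ℤ) * permLen ((B i)⁻¹ * B j) else 0) := by
        push_cast [FnnOne]
        ring
      rw [Fintype.sum_sum_type]
      simp only [Fintype.sum_sum_type, Fintype.sum_bool]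
      simp only [auxH]
      rw [hF]
      simp only [Finset.sum_add_distrib]
      rw [hEpart]
      ring
    have hsum_le : ∑ u, ∑ v, f u v * (auxPhi n k B v - auxPhi n k B u)
        ≤ ∑ u, ∑ v, auxH n k s t e B u v :=
      Finset.sum_le_sum fun u _ => Finset.sum_le_sum fun v _ => hpt u v
    rw [hA, hC2] at hsum_le
    linarith
  refine ⟨main, ?_⟩
  intro X hX B
  obtain ⟨fw, hfw, hval⟩ := hX.1
  rw [← hval]
  exact main fw hfw B
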